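/- Let G be a group, let W be a set of elements of FreeGroup ℕ, and let N be the verbal subgroup of G determined by W, namely N = Subgroup.normalClosure {x : G | ∃ w ∈ W, ∃ g : ℕ → G, FreeGroup.lift g w = x}. If H is a verbally closed subgroup of G, then the image of H under the quotient map G →* G ⧸ N is a verbally closed subgroup of G ⧸ N. -/

import Mathlib

/-- A subgroup `H` of a group `G` is verbally closed. -/
def IsVerballyClosed {G : Type*} [Group G] (H : Subgroup G) : Prop :=
  ∀ (n : ℕ) (w : FreeGroup (Fin n)) (h : G), h ∈ H →
    (∃ g : Fin n → G, FreeGroup.lift g w = h) →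
    ∃ a : Fin n → H, FreeGroup.lift (fun i => (a i : G)) w = h

/-- Applying a homomorphism to a lift. -/
theorem VC.hom_lift {G K : Type*} [Group G] [Group K] (φ : G →* K) {ι : Type*}
    (g : ι → G) (w : FreeGroup ι) :
    φ (FreeGroup.lift g w) = FreeGroup.lift (fun i => φ (g i)) w :=
  DFunLike.congr_fun
    (FreeGroup.ext_hom (φ.comp (FreeGroup.lift g)) (FreeGroup.lift fun i => φ (g i))
      (by simp)) w

theorem VC.lift_map {α β G : Type*} [Group G] (f : α → β) (g : β → G) (w : FreeGroup α) :
    FreeGroup.lift g (FreeGroup.map f w) = FreeGroup.lift (fun x => g (f x)) w :=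
  DFunLike.congr_fun
    (FreeGroup.ext_hom ((FreeGroup.lift g).comp (FreeGroup.map f))
      (FreeGroup.lift fun x => g (f x)) (by simp)) w

theorem VC.map_eq_self {α : Type*} [DecidableEq α] (f : α → α) (w : FreeGroup α)
    (h : ∀ p ∈ w.toWord, f p.1 = p.1) : FreeGroup.map f w = w := by
  conv_lhs => rw [← FreeGroup.mk_toWord (x := w)]
  conv_rhs => rw [← FreeGroup.mk_toWord (x := w)]
  rw [FreeGroup.map.mk]
  congr 1
  have : ∀ p ∈ w.toWord, (fun x : α × Bool => (f x.1, x.2)) p = id p := by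
    intro p hp
    simp [h p hp]
  rw [List.map_congr_left this, List.map_id]

/-- A verbally closed subgroup is closed under equations of words over any index type. -/
theorem VC.general {G : Type*} [Group G] {H : Subgroup G} (hH : IsVerballyClosed H)
    {ι : Type*} (w : FreeGroup ι) (h : G) (hh : h ∈ H) (g : ι → G)
    (hg : FreeGroup.lift g w = h) :
    ∃ a : ι → H, FreeGroup.lift (fun i => (a i : G)) w = h := by
  letI := Classical.decEq ι
  by_cases hw : w.toWord = []
  · have hw1 : w = 1 := FreeGroup.toWord_eq_nil_iff.1 hw
    subst hw1
    refine ⟨fun _ => 1, ?_⟩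
    rw [map_one] at hg ⊢
    exact hg
  · set letters : List ι := (w.toWord.map Prod.fst).dedup with hletters
    have hm : 0 < letters.length := by
      rw [List.length_pos_iff]
      simp only [hletters, ne_eq, List.dedup_eq_nil, List.map_eq_nil_iff]
      exact hw
    set m := letters.length
    set f : ι → Fin m := fun x =>
      if hx : x ∈ letters then ⟨letters.idxOf x, List.idxOf_lt_length_iff.2 hx⟩
      else ⟨0, hm⟩ with hf
    set s : Fin m → ι := letters.get with hs
    have hfs : ∀ i : Fin m, f (s i) = i := by
      intro i
      have hmem : s i ∈ letters := by
        simp only [hs, List.get_eq_getElem]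
        exact List.getElem_mem i.isLt
      simp only [hf, dif_pos hmem]
      apply Fin.ext
      simp only [hs, List.get_eq_getElem]
      exact List.Nodup.idxOf_getElem (List.nodup_dedup _) i i.isLt
    have hsf : ∀ p ∈ w.toWord, s (f p.1) = p.1 := by
      intro p hp
      have hmem : p.1 ∈ letters := by
        rw [hletters, List.mem_dedup]
        exact List.mem_map.2 ⟨p, hp, rfl⟩
      simp only [hf, dif_pos hmem, hs]
      exact List.idxOf_get _
    set w' : FreeGroup (Fin m) := FreeGroup.map f w with hw'
    have hmaps : FreeGroup.map s w' = w := by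
      rw [hw', FreeGroup.map.comp]
      exact VC.map_eq_self _ _ hsf
    have hg' : FreeGroup.lift (fun i => g (s i)) w' = h := by
      rw [← hmaps, VC.lift_map] at hg
      exact hg
    obtain ⟨a, ha⟩ := hH m w' h hh ⟨fun i => g (s i), hg'⟩
    refine ⟨fun x => a (f x), ?_⟩
    have : FreeGroup.lift (fun x => ((a (f x) : H) : G)) (FreeGroup.map s w')
        = FreeGroup.lift (fun i => ((a (f (s i)) : H) : G)) w' := VC.lift_map _ _ _
    rw [hmaps] at this
    rw [this]
    have heq : (fun i => ((a (f (s i)) : H) : G)) = fun i => ((a i : H) : G) := by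
      funext i
      rw [hfs i]
    rw [heq]
    exact ha

theorem VC.exists_word {G : Type*} [Group G] (W : Set (FreeGroup ℕ))
    (N : Subgroup G)
    (hN : N = Subgroup.normalClosure
      {x : G | ∃ w ∈ W, ∃ g : ℕ → G, FreeGroup.lift g w = x})
    {x : G} (hx : x ∈ N) :
    ∃ (u : FreeGroup ℕ) (g' : ℕ → G), FreeGroup.lift g' u = x ∧
      ∀ b : ℕ → G, FreeGroup.lift b u ∈ N := by
  subst hN
  set S : Set G := {x : G | ∃ w ∈ W, ∃ g : ℕ → G, FreeGroup.lift g w = x} with hS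
  rw [Subgroup.normalClosure] at hx
  refine Subgroup.closure_induction
    (p := fun x _ => ∃ (u : FreeGroup ℕ) (g' : ℕ → G), FreeGroup.lift g' u = x ∧
      ∀ b : ℕ → G, FreeGroup.lift b u ∈ Subgroup.normalClosure S)
    ?_ ?_ ?_ ?_ hx
  · intro y hy
    obtain ⟨a, haS, hconj⟩ := Group.mem_conjugatesOfSet_iff.1 hy
    obtain ⟨c, hc⟩ := isConj_iff.1 hconj
    obtain ⟨v, hvW, gv, hgv⟩ := haS
    refine ⟨FreeGroup.of 0 * FreeGroup.map Nat.succ v * (FreeGroup.of 0)⁻¹,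
      fun k => match k with | 0 => c | (k + 1) => gv k, ?_, ?_⟩
    · rw [map_mul, map_mul, map_inv, FreeGroup.lift_apply_of, VC.lift_map]
      rw [← hc, ← hgv]
    · intro b
      rw [map_mul, map_mul, map_inv, FreeGroup.lift_apply_of, VC.lift_map]
      have hmem : FreeGroup.lift (fun x => b x.succ) v ∈ Subgroup.normalClosure S :=
        Subgroup.subset_normalClosure ⟨v, hvW, fun x => b x.succ, rfl⟩
      exact Subgroup.normalClosure_normal.conj_mem _ hmem (b 0)
  · exact ⟨1, fun _ => 1, map_one _, fun b => by rw [map_one]; exact one_mem _⟩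
  · rintro y z _ _ ⟨u1, g1, e1, m1⟩ ⟨u2, g2, e2, m2⟩
    refine ⟨FreeGroup.map (fun k => 2 * k) u1 * FreeGroup.map (fun k => 2 * k + 1) u2,
      fun k => if k % 2 = 0 then g1 (k / 2) else g2 (k / 2), ?_, ?_⟩
    · rw [map_mul, VC.lift_map, VC.lift_map]
      have h1 : (fun k => if (2 * k) % 2 = 0 then g1 ((2 * k) / 2) else g2 ((2 * k) / 2))
          = g1 := by
        funext k
        have e : (2 * k) % 2 = 0 := by omega
        have e' : (2 * k) / 2 = k := by omega
        rw [if_pos e, e']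
      have h2 : (fun k => if (2 * k + 1) % 2 = 0 then g1 ((2 * k + 1) / 2)
          else g2 ((2 * k + 1) / 2)) = g2 := by
        funext k
        have e : ¬ ((2 * k + 1) % 2 = 0) := by omega
        have e' : (2 * k + 1) / 2 = k := by omega
        rw [if_neg e, e']
      rw [h1, h2, e1, e2]
    · intro b
      rw [map_mul, VC.lift_map, VC.lift_map]
      exact mul_mem (m1 _) (m2 _)
  · rintro y _ ⟨u, g', e, m⟩
    exact ⟨u⁻¹, g', by rw [map_inv, e], fun b => by rw [map_inv]; exact inv_mem (m b)⟩

theorem image_of_verbally_closed_in_quotient_by_verbal_subgroup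
    {G : Type*} [Group G] (W : Set (FreeGroup ℕ))
    (N : Subgroup G)
    (hN : N = Subgroup.normalClosure
      {x : G | ∃ w ∈ W, ∃ g : ℕ → G, FreeGroup.lift g w = x})
    [N.Normal]
    (H : Subgroup G) (hH : IsVerballyClosed H) :
    IsVerballyClosed (H.map (QuotientGroup.mk' N)) := by
  intro n w hbar hhbar ⟨gbar, hgbar⟩
  obtain ⟨h, hhH, rfl⟩ := Subgroup.mem_map.1 hhbar
  choose g hg using fun i => QuotientGroup.mk_surjective (gbar i)
  have hq : ((FreeGroup.lift g w : G) : G ⧸ N) = ((h : G) : G ⧸ N) := by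
    have hc := VC.hom_lift (QuotientGroup.mk' N) g w
    simp only [QuotientGroup.mk'_apply] at hc
    rw [hc]
    have hge : (fun i => ((g i : G) : G ⧸ N)) = gbar := funext fun i => hg i
    rw [hge, hgbar, QuotientGroup.mk'_apply]
  have hx : h⁻¹ * FreeGroup.lift g w ∈ N := by
    rw [← QuotientGroup.eq]
    exact hq.symm
  obtain ⟨u, g', hux, hval⟩ := VC.exists_word W N hN hx
  -- combined word over `Fin n ⊕ ℕ`
  set W' : FreeGroup (Fin n ⊕ ℕ) :=
    FreeGroup.map Sum.inl w * (FreeGroup.map Sum.inr u)⁻¹ with hW'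
  have hWval : FreeGroup.lift (Sum.elim g g') W' = h := by
    rw [hW', map_mul, map_inv, VC.lift_map, VC.lift_map]
    simp only [Sum.elim_inl, Sum.elim_inr]
    rw [hux]
    group
  obtain ⟨a, ha⟩ := VC.general hH W' h hhH (Sum.elim g g') hWval
  refine ⟨fun i => ⟨QuotientGroup.mk' N (a (Sum.inl i) : G),
    Subgroup.mem_map.2 ⟨(a (Sum.inl i) : G), (a (Sum.inl i)).2, rfl⟩⟩, ?_⟩
  have hmk := congrArg (QuotientGroup.mk' N) ha
  rw [hW', map_mul, map_inv, VC.lift_map, VC.lift_map] at hmk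
  rw [map_mul, map_inv] at hmk
  have hinner : (QuotientGroup.mk' N)
      (FreeGroup.lift (fun x => ((a (Sum.inr x) : H) : G)) u) = 1 := by
    rw [QuotientGroup.mk'_apply, QuotientGroup.eq_one_iff]
    exact hval _
  rw [hinner, inv_one, mul_one] at hmk
  rw [VC.hom_lift (QuotientGroup.mk' N)] at hmk
  exact hmk
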